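/- Conjugation of partitions gives a bijection between the set of unlimited parity alternating partitions of n and the set of partitions of n in which every part size other than the largest appears an odd number of times: the conjugate of any partition in which all distinct part sizes except the largest occur an odd number of times is an unlimited parity alternating partition, and vice versa. -/
import Mathlib


/-- A partition is (unlimited) parity alternating if any two consecutive distinct part
sizes have opposite parity. -/
def ParityAlternating {n : ℕ} (p : n.Partition) : Prop :=
  ∀ a ∈ p.parts, ∀ b ∈ p.parts, a < b →
    (∀ c ∈ p.parts, ¬(a < c ∧ c < b)) → (Odd a ↔ Even b)

/-- Every part size other than the largest occurs an odd number of times. -/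
def OddMultExceptLargest {n : ℕ} (p : n.Partition) : Prop :=
  ∀ a ∈ p.parts, (∃ b ∈ p.parts, a < b) → Odd (Multiset.count a p.parts)

/-- The multiset of parts of the conjugate partition: its `k`-th part (for `1 ≤ k`)
is the number of parts of the original partition that are at least `k`. -/
def conjParts (s : Multiset ℕ) : Multiset ℕ :=
  Multiset.filter (0 < ·)
    ((Finset.Icc 1 s.sum).val.map fun k => Multiset.card (s.filter fun a => k ≤ a))

namespace ConjAux

/-- number of parts that are at least `k` -/
def F (s : Multiset ℕ) (k : ℕ) : ℕ := Multiset.countP (fun a => k ≤ a) s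

lemma F_anti (s : Multiset ℕ) {j k : ℕ} (h : j ≤ k) : F s k ≤ F s j := by
  induction s using Multiset.induction with
  | empty => simp [F]
  | cons a t ih =>
      simp only [F, Multiset.countP_cons] at *
      have : (if k ≤ a then 1 else 0) ≤ (if j ≤ a then (1:ℕ) else 0) := by
        split_ifs <;> omega
      omega

lemma count_eq (s : Multiset ℕ) (m : ℕ) : Multiset.count m s = F s m - F s (m+1) := by
  induction s using Multiset.induction with
  | empty => simp [F]
  | cons a t ih =>
      have h1 : F t (m+1) ≤ F t m := F_anti t (by omega)
      simp only [F, Multiset.countP_cons, Multiset.count_cons] at *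
      split_ifs <;> omega

lemma mem_le_sum {s : Multiset ℕ} {a : ℕ} (h : a ∈ s) : a ≤ s.sum := by
  obtain ⟨t, rfl⟩ := Multiset.exists_cons_of_mem h
  rw [Multiset.sum_cons]; omega

lemma le_sum_of_F_pos {s : Multiset ℕ} {k : ℕ} (h : 0 < F s k) : k ≤ s.sum := by
  obtain ⟨a, ha, hk⟩ := Multiset.countP_pos.mp h
  exact hk.trans (mem_le_sum ha)

lemma card_le_sum {s : Multiset ℕ} (hs : ∀ a ∈ s, 0 < a) : Multiset.card s ≤ s.sum := by
  induction s using Multiset.induction with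
  | empty => simp
  | cons a t ih =>
      have h1 := hs a (Multiset.mem_cons_self a t)
      have h2 := ih (fun b hb => hs b (Multiset.mem_cons_of_mem hb))
      simp only [Multiset.card_cons, Multiset.sum_cons]
      omega

lemma conjParts_eq (s : Multiset ℕ) :
    conjParts s = Multiset.filter (0 < ·) ((Finset.Icc 1 s.sum).val.map (F s)) := by
  have : (fun k => Multiset.card (s.filter fun a => k ≤ a)) = F s := by
    funext k
    exact (Multiset.countP_eq_card_filter _ _).symm
  rw [conjParts, this]

lemma mem_conjParts {s : Multiset ℕ} {m : ℕ} :
    m ∈ conjParts s ↔ 0 < m ∧ ∃ k ∈ Finset.Icc 1 s.sum, F s k = m := by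
  rw [conjParts_eq, Multiset.mem_filter, Multiset.mem_map]
  simp only [Finset.mem_val]
  tauto

lemma conjParts_pos {s : Multiset ℕ} {m : ℕ} (h : m ∈ conjParts s) : 0 < m :=
  (mem_conjParts.mp h).1

lemma F_conjParts (s : Multiset ℕ) {j : ℕ} (hj : 1 ≤ j) :
    F (conjParts s) j = ((Finset.Icc 1 s.sum).filter (fun k => j ≤ F s k)).card := by
  rw [conjParts_eq, F, Multiset.countP_filter, Multiset.countP_map]
  have h1 : Multiset.filter (fun k => (fun a => j ≤ a ∧ 0 < a) (F s k)) (Finset.Icc 1 s.sum).val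
      = Multiset.filter (fun k => j ≤ F s k) (Finset.Icc 1 s.sum).val := by
    apply Multiset.filter_congr
    intro k _
    constructor
    · exact fun h => h.1
    · exact fun h => ⟨h, by omega⟩
  rw [h1]
  rfl

lemma card_filter_downward {P : ℕ → Prop} [DecidablePred P] {N k : ℕ} (hk : 1 ≤ k)
    (hP : ∀ k₁ k₂, k₁ ≤ k₂ → P k₂ → P k₁) :
    k ≤ ((Finset.Icc 1 N).filter P).card ↔ k ≤ N ∧ P k := by
  constructor
  · intro h
    have hN : ((Finset.Icc 1 N).filter P).card ≤ N := by
      have := Finset.card_le_card (Finset.filter_subset P (Finset.Icc 1 N))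
      simpa [Nat.card_Icc] using this
    refine ⟨le_trans h hN, ?_⟩
    by_contra hPk
    have hsub2 : (Finset.Icc 1 N).filter P ⊆ Finset.Icc 1 (k-1) := by
      intro x hx
      simp only [Finset.mem_filter, Finset.mem_Icc] at hx ⊢
      refine ⟨hx.1.1, ?_⟩
      by_contra hxk
      exact hPk (hP k x (by omega) hx.2)
    have := Finset.card_le_card hsub2
    simp only [Nat.card_Icc] at this
    omega
  · rintro ⟨hkN, hPk⟩
    have hsub : Finset.Icc 1 k ⊆ (Finset.Icc 1 N).filter P := by
      intro x hx
      simp only [Finset.mem_Icc] at hx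
      simp only [Finset.mem_filter, Finset.mem_Icc]
      exact ⟨⟨hx.1, le_trans hx.2 hkN⟩, hP x k hx.2 hPk⟩
    have := Finset.card_le_card hsub
    simpa [Nat.card_Icc] using this

lemma galois {s : Multiset ℕ} {j k : ℕ} (hj : 1 ≤ j) (hk : 1 ≤ k) :
    j ≤ F s k ↔ k ≤ F (conjParts s) j := by
  rw [F_conjParts s hj,
    card_filter_downward hk (fun k₁ k₂ h h2 => le_trans h2 (F_anti s h))]
  constructor
  · intro h; exact ⟨le_sum_of_F_pos (lt_of_lt_of_le hj h), h⟩
  · exact fun h => h.2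

lemma sum_ite_le (a N : ℕ) (h1 : 1 ≤ a) (h2 : a ≤ N) :
    (∑ k ∈ Finset.Icc 1 N, if k ≤ a then 1 else 0) = a := by
  simp only [Finset.sum_boole, Nat.cast_id]
  have : (Finset.Icc 1 N).filter (fun k => k ≤ a) = Finset.Icc 1 a := by
    ext x
    simp only [Finset.mem_filter, Finset.mem_Icc]
    omega
  rw [this, Nat.card_Icc]
  omega

lemma sum_F (s : Multiset ℕ) (N : ℕ) (hs : ∀ a ∈ s, 1 ≤ a ∧ a ≤ N) :
    (∑ k ∈ Finset.Icc 1 N, F s k) = s.sum := by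
  induction s using Multiset.induction with
  | empty => simp [F]
  | cons a t ih =>
      have ha := hs a (Multiset.mem_cons_self a t)
      rw [Multiset.sum_cons]
      simp only [F, Multiset.countP_cons]
      rw [Finset.sum_add_distrib]
      have ih' := ih (fun b hb => hs b (Multiset.mem_cons_of_mem hb))
      simp only [F] at ih'
      rw [ih', sum_ite_le a N ha.1 ha.2]
      omega

lemma sum_filter_pos (t : Multiset ℕ) : (Multiset.filter (0 < ·) t).sum = t.sum := by
  induction t using Multiset.induction with
  | empty => simp
  | cons a t ih =>
      by_cases h : 0 < a
      · simp [Multiset.filter_cons, h, ih]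
      · have ha : a = 0 := by omega
        simp [Multiset.filter_cons, h, ih, ha]

lemma sum_conjParts {s : Multiset ℕ} (hs : ∀ a ∈ s, 0 < a) : (conjParts s).sum = s.sum := by
  rw [conjParts_eq, sum_filter_pos]
  have h1 : ((Finset.Icc 1 s.sum).val.map (F s)).sum = ∑ k ∈ Finset.Icc 1 s.sum, F s k := rfl
  rw [h1]
  exact sum_F s s.sum (fun a ha => ⟨hs a ha, mem_le_sum ha⟩)

lemma F_conj_conj {s : Multiset ℕ} (hs : ∀ a ∈ s, 0 < a) {j : ℕ} (hj : 1 ≤ j) :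
    F (conjParts (conjParts s)) j = F s j := by
  rw [F_conjParts _ hj, sum_conjParts hs]
  have heq : (Finset.Icc 1 s.sum).filter (fun k => j ≤ F (conjParts s) k)
      = Finset.Icc 1 (F s j) := by
    ext k
    simp only [Finset.mem_filter, Finset.mem_Icc]
    constructor
    · rintro ⟨⟨h1, _⟩, h3⟩
      exact ⟨h1, (galois h1 hj).mpr h3⟩
    · rintro ⟨h1, h2⟩
      have hkN : k ≤ s.sum :=
        le_trans h2 (le_trans (Multiset.countP_le_card _ _) (card_le_sum hs))
      exact ⟨⟨h1, hkN⟩, (galois h1 hj).mp h2⟩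
  rw [heq, Nat.card_Icc]
  omega

lemma conj_conj {s : Multiset ℕ} (hs : ∀ a ∈ s, 0 < a) : conjParts (conjParts s) = s := by
  rw [Multiset.ext]
  intro m
  rcases Nat.eq_zero_or_pos m with rfl | hm
  · have h1 : 0 ∉ conjParts (conjParts s) := fun h => absurd (conjParts_pos h) (by omega)
    have h2 : 0 ∉ s := fun h => absurd (hs 0 h) (by omega)
    rw [Multiset.count_eq_zero.mpr h1, Multiset.count_eq_zero.mpr h2]
  · rw [count_eq, count_eq, F_conj_conj hs hm, F_conj_conj hs (by omega)]

lemma oddMult_to_parityAlt {s : Multiset ℕ} (hs : ∀ a ∈ s, 0 < a)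
    (h : ∀ a ∈ s, (∃ b ∈ s, a < b) → Odd (Multiset.count a s)) :
    ∀ a ∈ conjParts s, ∀ b ∈ conjParts s, a < b →
      (∀ c ∈ conjParts s, ¬(a < c ∧ c < b)) → (Odd a ↔ Even b) := by
  intro a ha b hb hab hgap
  obtain ⟨hb0, k0, hk0, hFk0⟩ := mem_conjParts.mp hb
  obtain ⟨ha0, k1, hk1, hFk1⟩ := mem_conjParts.mp ha
  have hk1Icc := Finset.mem_Icc.mp hk1
  set T := (Finset.Icc 1 s.sum).filter (fun k => F s k = b) with hT
  have hTne : T.Nonempty := ⟨k0, Finset.mem_filter.mpr ⟨hk0, hFk0⟩⟩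
  set K := T.max' hTne with hK
  have hKT : K ∈ T := T.max'_mem hTne
  obtain ⟨hKIcc, hFK⟩ : K ∈ Finset.Icc 1 s.sum ∧ F s K = b := Finset.mem_filter.mp hKT
  have hK1 : 1 ≤ K := (Finset.mem_Icc.mp hKIcc).1
  have hlt : F s (K+1) < b := by
    have hle : F s (K+1) ≤ b := hFK ▸ F_anti s (Nat.le_succ K)
    rcases lt_or_eq_of_le hle with h' | h'
    · exact h'
    · exfalso
      have hpos : 0 < F s (K+1) := by omega
      have hmem : K+1 ∈ T := Finset.mem_filter.mpr
        ⟨Finset.mem_Icc.mpr ⟨by omega, le_sum_of_F_pos hpos⟩, h'⟩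
      have hlm : K + 1 ≤ K := Finset.le_max' T (K+1) hmem
      omega
  have hk1K : K < k1 := by
    by_contra hcon
    have := F_anti s (show k1 ≤ K by omega)
    omega
  have hge : a ≤ F s (K+1) := by
    have := F_anti s (show K + 1 ≤ k1 by omega)
    omega
  have hFK1 : F s (K+1) = a := by
    rcases lt_or_eq_of_le hge with h' | h'
    · exfalso
      have hcmem : F s (K+1) ∈ conjParts s := mem_conjParts.mpr
        ⟨by omega, K+1, Finset.mem_Icc.mpr ⟨by omega, le_sum_of_F_pos (by omega)⟩, rfl⟩
      exact hgap _ hcmem ⟨h', hlt⟩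
    · exact h'.symm
  have hcount : Multiset.count K s = b - a := by rw [count_eq, hFK, hFK1]
  have hKs : K ∈ s := Multiset.count_pos.mp (by omega)
  have hbig : ∃ b' ∈ s, K < b' := by
    obtain ⟨x, hx, hKx⟩ := Multiset.countP_pos.mp (show 0 < F s (K+1) by omega)
    exact ⟨x, hx, by omega⟩
  have hodd := h K hKs hbig
  rw [hcount] at hodd
  rw [Nat.odd_iff] at hodd ⊢
  rw [Nat.even_iff]
  omega

lemma parityAlt_to_oddMult {s : Multiset ℕ} (hs : ∀ a ∈ s, 0 < a)
    (h : ∀ a ∈ conjParts s, ∀ b ∈ conjParts s, a < b →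
      (∀ c ∈ conjParts s, ¬(a < c ∧ c < b)) → (Odd a ↔ Even b)) :
    ∀ a ∈ s, (∃ b ∈ s, a < b) → Odd (Multiset.count a s) := by
  intro m hm hbig
  set b := F s m with hbdef
  set a := F s (m+1) with hadef
  have hm1 : 1 ≤ m := hs m hm
  have hcount : Multiset.count m s = b - a := count_eq s m
  have hmono : a ≤ b := F_anti s (Nat.le_succ m)
  have hab : a < b := by
    have := Multiset.count_pos.mpr hm
    omega
  have ha0 : 0 < a := by
    obtain ⟨x, hx, hmx⟩ := hbig
    exact Multiset.countP_pos.mpr ⟨x, hx, by omega⟩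
  have hmN : m ≤ s.sum := mem_le_sum hm
  have hm1N : m+1 ≤ s.sum := le_sum_of_F_pos ha0
  have hbmem : b ∈ conjParts s := mem_conjParts.mpr
    ⟨by omega, m, Finset.mem_Icc.mpr ⟨hm1, hmN⟩, rfl⟩
  have hamem : a ∈ conjParts s := mem_conjParts.mpr
    ⟨ha0, m+1, Finset.mem_Icc.mpr ⟨by omega, hm1N⟩, rfl⟩
  have hgap : ∀ c ∈ conjParts s, ¬(a < c ∧ c < b) := by
    rintro c hc ⟨hac, hcb⟩
    obtain ⟨hc0, k, hk, hFk⟩ := mem_conjParts.mp hc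
    have h1 : m < k := by
      by_contra hcon
      have := F_anti s (show k ≤ m by omega)
      omega
    have h2 : k < m+1 := by
      by_contra hcon
      have := F_anti s (show m+1 ≤ k by omega)
      omega
    omega
  have hpar := h a hamem b hbmem hab hgap
  rw [hcount, Nat.odd_iff]
  rw [Nat.odd_iff, Nat.even_iff] at hpar
  omega

/-- conjugate of a partition -/
def conjP {n : ℕ} (p : n.Partition) : n.Partition where
  parts := conjParts p.parts
  parts_pos := fun h => conjParts_pos h
  parts_sum := by
    rw [sum_conjParts (fun a ha => p.parts_pos ha), p.parts_sum]

end ConjAux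

open ConjAux in
theorem conj_bijection_paritaryAlternating (n : ℕ) (hn : 1 ≤ n) :
    ∃ e : {p : n.Partition // OddMultExceptLargest p} ≃
          {p : n.Partition // ParityAlternating p},
      (∀ p, (e p).val.parts = conjParts p.val.parts) ∧
      (∀ q, (e.symm q).val.parts = conjParts q.val.parts) := by
  refine ⟨{
    toFun := fun p => ⟨conjP p.1,
      oddMult_to_parityAlt (fun a ha => p.1.parts_pos ha) p.2⟩
    invFun := fun q => ⟨conjP q.1, by
      have hpos : ∀ a ∈ q.1.parts, 0 < a := fun a ha => q.1.parts_pos ha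
      refine parityAlt_to_oddMult (fun a ha => conjParts_pos ha) ?_
      have hcp : (conjP q.1).parts = conjParts q.1.parts := rfl
      rw [hcp, conj_conj hpos]
      exact q.2⟩
    left_inv := fun p => Subtype.ext
      (Nat.Partition.ext (conj_conj (fun a ha => p.1.parts_pos ha)))
    right_inv := fun q => Subtype.ext
      (Nat.Partition.ext (conj_conj (fun a ha => q.1.parts_pos ha))) }, fun p => rfl, fun q => rfl⟩
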